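/- Let a, b, c be pairwise coprime positive integers. Then every integer t > (1/2)(a + b + c) + (1/2)√((1/3)(a + b + c)(a + b + c + 2abc) + (8/3)(ab + bc + ca)) can be written as t = ax + by + cz with strictly positive integers x, y, z. Equivalently, the largest integer not representable as a strictly positive integer combination of a, b, c, namely F*(a, b, c) = F(a, b, c) + a + b + c, satisfies F*(a, b, c) ≤ (1/2)(a + b + c) + (1/2)√((1/3)(a + b + c)(a + b + c + 2abc) + (8/3)(ab + bc + ca)). -/

import Mathlib

open Finset

lemma sum_range_card_le (s : Finset ℕ) : ∑ i ∈ range s.card, i ≤ ∑ i ∈ s, i := by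
  induction s using Finset.strongInduction with
  | _ s ih =>
    rcases s.eq_empty_or_nonempty with rfl | hs
    · simp
    · have hmax := s.max'_mem hs
      have hsub : s.erase (s.max' hs) ⊂ s := Finset.erase_ssubset hmax
      have hcard : s.card = (s.erase (s.max' hs)).card + 1 := by
        rw [Finset.card_erase_of_mem hmax]
        have : 1 ≤ s.card := Finset.card_pos.2 hs
        omega
      have hle : s.card - 1 ≤ s.max' hs := by
        have hss : s ⊆ range (s.max' hs + 1) := by
          intro i hi
          simp only [Finset.mem_range]
          exact Nat.lt_succ_of_le (Finset.le_max' s i hi)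
        have := Finset.card_le_card hss
        simp at this; omega
      calc ∑ i ∈ range s.card, i
          = ∑ i ∈ range (s.erase (s.max' hs)).card, i + (s.card - 1) := by
            rw [hcard]; rw [Finset.sum_range_succ]; omega
        _ ≤ ∑ i ∈ s.erase (s.max' hs), i + s.max' hs := Nat.add_le_add (ih _ hsub) hle
        _ = ∑ i ∈ s, i := by rw [← Finset.add_sum_erase s _ hmax]; omega

lemma period_sum (b α β : ℤ) (hb : 0 < b) (h : IsCoprime α b) :
    ∑ z ∈ range b.toNat, ((β + α * z) % b) = ∑ z ∈ range b.toNat, (z : ℤ) := by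
  obtain ⟨α', v, hinv⟩ := h  -- α' * α + v * b = 1
  have hmem : ∀ z : ℕ, z ∈ range b.toNat → ((β + α * z) % b).toNat ∈ range b.toNat := by
    intro z _
    rw [Finset.mem_range]
    have h1 : (β + α * z) % b < b := Int.emod_lt_of_pos _ hb
    have h0 : 0 ≤ (β + α * z) % b := Int.emod_nonneg _ hb.ne'
    omega
  have hmem2 : ∀ w : ℕ, w ∈ range b.toNat → ((α' * ((w : ℤ) - β)) % b).toNat ∈ range b.toNat := by
    intro w _
    have h1 : (α' * ((w:ℤ) - β)) % b < b := Int.emod_lt_of_pos _ hb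
    have h0 : 0 ≤ (α' * ((w:ℤ) - β)) % b := Int.emod_nonneg _ hb.ne'
    rw [Finset.mem_range]; omega
  refine Finset.sum_nbij' (fun z => ((β + α * z) % b).toNat)
    (fun w => ((α' * ((w : ℤ) - β)) % b).toNat) hmem hmem2 ?_ ?_ ?_
  · -- left inverse : j (i z) = z
    intro z hz
    rw [Finset.mem_range] at hz
    have h0 : 0 ≤ (β + α * z) % b := Int.emod_nonneg _ hb.ne'
    rw [Int.toNat_of_nonneg h0]
    have e1 : α' * ((β + α * z) % b - β) ≡ α' * ((β + α * z) - β) [ZMOD b] :=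
      ((Int.mod_modEq _ _).sub_right β).mul_left α'
    have e2 : α' * ((β + α * z) - β) = (z : ℤ) + b * (-(v * z)) := by
      have hαα : α' * α = 1 - v * b := by linarith
      calc α' * ((β + α * z) - β) = (α' * α) * z := by ring
        _ = (1 - v * b) * z := by rw [hαα]
        _ = (z : ℤ) + b * (-(v * z)) := by ring
    have e3 : (z : ℤ) + b * (-(v * z)) ≡ (z : ℤ) [ZMOD b] :=
      (Int.modEq_iff_dvd.2 ⟨-(v*z), by ring⟩).symm
    have key : (α' * ((β + α * z) % b - β)) % b = (z : ℤ) % b := (e1.trans (e2 ▸ e3)).eq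
    have hzb : (z : ℤ) % b = (z : ℤ) := Int.emod_eq_of_lt (by positivity) (by exact_mod_cast (by omega : (z:ℤ) < b.toNat) |>.trans_eq (Int.toNat_of_nonneg hb.le))
    rw [key, hzb, Int.toNat_natCast]
  · -- right inverse : i (j w) = w
    intro w hw
    rw [Finset.mem_range] at hw
    have h0 : 0 ≤ (α' * ((w:ℤ) - β)) % b := Int.emod_nonneg _ hb.ne'
    rw [Int.toNat_of_nonneg h0]
    have e1 : β + α * ((α' * ((w:ℤ) - β)) % b) ≡ β + α * (α' * ((w:ℤ) - β)) [ZMOD b] :=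
      ((Int.mod_modEq _ _).mul_left α).add_left β
    have e2 : β + α * (α' * ((w:ℤ) - β)) = (w : ℤ) + b * (-(v * ((w:ℤ) - β))) := by
      have hαα : α * α' = 1 - v * b := by linarith
      calc β + α * (α' * ((w:ℤ) - β)) = β + (α * α') * ((w:ℤ) - β) := by ring
        _ = β + (1 - v * b) * ((w:ℤ) - β) := by rw [hαα]
        _ = (w : ℤ) + b * (-(v * ((w:ℤ) - β))) := by ring
    have e3 : (w : ℤ) + b * (-(v * ((w:ℤ) - β))) ≡ (w : ℤ) [ZMOD b] :=
      (Int.modEq_iff_dvd.2 ⟨-(v * ((w:ℤ) - β)), by ring⟩).symm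
    have key : (β + α * ((α' * ((w:ℤ) - β)) % b)) % b = (w : ℤ) % b := (e1.trans (e2 ▸ e3)).eq
    have hwb : (w : ℤ) % b = (w : ℤ) := Int.emod_eq_of_lt (by positivity) (by exact_mod_cast (by omega : (w:ℤ) < b.toNat) |>.trans_eq (Int.toNat_of_nonneg hb.le))
    rw [key, hwb, Int.toNat_natCast]
  · intro z hz
    have h0 : 0 ≤ (β + α * z) % b := Int.emod_nonneg _ hb.ne'
    exact (Int.toNat_of_nonneg h0).symm

lemma gauss_int (n : ℕ) : 2 * ∑ z ∈ range n, (z : ℤ) = n * (n - 1) := by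
  induction n with
  | zero => simp
  | succ m ihm => rw [Finset.sum_range_succ]; push_cast; ring_nf; ring_nf at ihm; omega

lemma sum_emod_bound (b α β : ℤ) (hb : 0 < b) (h : IsCoprime α b) (K : ℕ) :
    8 * ∑ z ∈ range K, ((β + α * z) % b) ≤ 4 * K * (b - 1) + b ^ 2 := by
  induction K using Nat.strong_induction_on with
  | _ K ih =>
  have hBb : ((b.toNat : ℤ)) = b := Int.toNat_of_nonneg hb.le
  set f : ℕ → ℤ := fun z => (β + α * z) % b with hf
  rcases le_or_gt b.toNat K with hbK | hKb
  · -- K ≥ b.toNat : peel off one full period at the end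
    set M := K - b.toNat with hM
    have hMK : M < K := by
      have : 0 < b.toNat := by omega
      omega
    have hsplit : (∑ z ∈ Ico 0 M, f z) + ∑ z ∈ Ico M K, f z = ∑ z ∈ Ico 0 K, f z :=
      Finset.sum_Ico_consecutive f (Nat.zero_le M) (by omega)
    have hper : ∑ z ∈ Ico M K, f z = ∑ z ∈ range b.toNat, ((β + α * M + α * z) % b) := by
      rw [Finset.sum_Ico_eq_sum_range]
      have : K - M = b.toNat := by omega
      rw [this]
      apply Finset.sum_congr rfl
      intro z _
      simp only [hf]
      congr 1
      push_cast
      ring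
    have hper2 : 2 * ∑ z ∈ Ico M K, f z = b * (b - 1) := by
      rw [hper, period_sum b α _ hb h, gauss_int, hBb]
    have ihM := ih M hMK
    have hcast : ((K : ℤ)) = (M : ℤ) + b.toNat := by push_cast; omega
    have hsplit' : (∑ z ∈ range M, f z) + ∑ z ∈ Ico M K, f z = ∑ z ∈ range K, f z := by
      rw [← Nat.Ico_zero_eq_range, ← Nat.Ico_zero_eq_range]; exact hsplit
    rw [← hsplit', hcast, hBb]
    linarith
  · -- K < b.toNat : partial block, use distinctness
    set B := b.toNat with hB
    set g : ℕ → ℕ := fun z => ((β + α * z) % b).toNat with hg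
    have hfg : ∀ z : ℕ, f z = (g z : ℤ) := by
      intro z
      simp only [hf, hg]
      exact (Int.toNat_of_nonneg (Int.emod_nonneg _ hb.ne')).symm
    have hinj : ∀ x ∈ Ico K B, ∀ y ∈ Ico K B, g x = g y → x = y := by
      intro x hx y hy hxy
      rw [Finset.mem_Ico] at hx hy
      have hfx : f x = f y := by rw [hfg, hfg, hxy]
      have hmod : (β + α * (x:ℤ)) ≡ (β + α * (y:ℤ)) [ZMOD b] := hfx
      have hdvd : b ∣ α * ((y : ℤ) - x) := by
        have hd := Int.ModEq.dvd hmod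
        have heq : (β + α * y) - (β + α * x) = α * ((y:ℤ) - (x:ℤ)) := by ring
        rwa [heq] at hd
      have hdvd2 : b ∣ ((y : ℤ) - x) := (h.symm).dvd_of_dvd_mul_left hdvd
      rcases hdvd2 with ⟨k, hk⟩
      have hx2 : (x : ℤ) < B := by exact_mod_cast hx.2
      have hy2 : (y : ℤ) < B := by exact_mod_cast hy.2
      have hbB : (B : ℤ) = b := hBb
      have hk1 : k < 1 := by nlinarith
      have hk2 : (-1 : ℤ) < k := by nlinarith
      have hk0 : k = 0 := by omega
      rw [hk0, mul_zero] at hk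
      omega
    have hcard : (Ico K B).card = B - K := Nat.card_Ico K B
    have himage : ∑ i ∈ (Ico K B).image g, i = ∑ z ∈ Ico K B, g z := Finset.sum_image hinj
    have hcardim : ((Ico K B).image g).card = B - K := by rw [Finset.card_image_of_injOn hinj, hcard]
    have hlow : ∑ i ∈ range (B - K), i ≤ ∑ z ∈ Ico K B, g z := by
      rw [← himage, ← hcardim]
      exact sum_range_card_le _
    -- full sum over range B
    have hsplit : (∑ z ∈ Ico 0 K, f z) + ∑ z ∈ Ico K B, f z = ∑ z ∈ Ico 0 B, f z :=
      Finset.sum_Ico_consecutive f (Nat.zero_le K) hKb.le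
    have hfull : 2 * ∑ z ∈ Ico 0 B, f z = b * (b - 1) := by
      rw [Nat.Ico_zero_eq_range]
      rw [hf]
      rw [period_sum b α β hb h, gauss_int, hBb]
    -- cast the partial lower bound to ℤ
    have hlowZ : ((B : ℤ) - K) * ((B:ℤ) - K - 1) ≤ 2 * ∑ z ∈ Ico K B, f z := by
      have e1 : ∑ z ∈ Ico K B, f z = ((∑ z ∈ Ico K B, g z : ℕ) : ℤ) := by
        rw [Nat.cast_sum]
        exact Finset.sum_congr rfl fun z _ => hfg z
      have e2 : 2 * ((∑ i ∈ range (B - K), i : ℕ) : ℤ) = ((B:ℤ) - K) * ((B:ℤ) - K - 1) := by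
        have := gauss_int (B - K)
        have hc : ((B - K : ℕ) : ℤ) = (B:ℤ) - K := by push_cast [Nat.cast_sub hKb.le]; omega
        rw [← hc]
        rw [← this]
        congr 1
        rw [Nat.cast_sum]
      rw [e1]
      have := hlow
      have hcast2 : ((∑ i ∈ range (B - K), i : ℕ) : ℤ) ≤ ((∑ z ∈ Ico K B, g z : ℕ) : ℤ) := by exact_mod_cast this
      linarith
    have hKB : (K : ℤ) < (B : ℤ) := by exact_mod_cast hKb
    have hbB : (B : ℤ) = b := hBb
    rw [← Nat.Ico_zero_eq_range]
    have h0K : 0 ≤ (K:ℤ) := by positivity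
    nlinarith [hsplit, hfull, hlowZ, sq_nonneg ((b:ℤ) - 2 * K)]

lemma nonrep_two (a b m α' β' : ℤ) (ha : 0 < a) (hb : 0 < b) (hab : IsCoprime a b)
    (hα : α' * a ≡ 1 [ZMOD b]) (hβ : β' * b ≡ 1 [ZMOD a])
    (hm : ¬ ∃ x y : ℤ, 0 ≤ x ∧ 0 ≤ y ∧ m = a * x + b * y) :
    m + a * b ≤ a * ((α' * m) % b) + b * ((β' * m) % a) := by
  set u : ℤ := (α' * m) % b with hu
  set w : ℤ := (β' * m) % a with hw
  have hu0 : 0 ≤ u := Int.emod_nonneg _ hb.ne'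
  have hub : u < b := Int.emod_lt_of_pos _ hb
  have hw0 : 0 ≤ w := Int.emod_nonneg _ ha.ne'
  have hwa : w < a := Int.emod_lt_of_pos _ ha
  -- a * u ≡ m [ZMOD b]
  have hau : a * u ≡ m [ZMOD b] := by
    calc a * u ≡ a * (α' * m) [ZMOD b] := (Int.mod_modEq _ _).mul_left a
      _ = (α' * a) * m := by ring
      _ ≡ 1 * m [ZMOD b] := hα.mul_right m
      _ = m := by ring
  have hbw : b * w ≡ m [ZMOD a] := by
    calc b * w ≡ b * (β' * m) [ZMOD a] := (Int.mod_modEq _ _).mul_left b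
      _ = (β' * b) * m := by ring
      _ ≡ 1 * m [ZMOD a] := hβ.mul_right m
      _ = m := by ring
  -- d = a*u + b*w - m is divisible by a*b
  have hdb : b ∣ a * u + b * w - m := by
    have h1 : b ∣ (a * u - m) := by
      have := Int.ModEq.dvd hau
      rwa [show m - a * u = -(a*u - m) by ring, dvd_neg] at this
    rcases h1 with ⟨k, hk⟩
    exact ⟨k + w, by linarith [hk]⟩
  have hda : a ∣ a * u + b * w - m := by
    have h1 : a ∣ (b * w - m) := by
      have := Int.ModEq.dvd hbw
      rwa [show m - b * w = -(b*w - m) by ring, dvd_neg] at this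
    rcases h1 with ⟨k, hk⟩
    exact ⟨u + k, by linarith [hk]⟩
  have hdab : a * b ∣ a * u + b * w - m := hab.mul_dvd hda hdb
  rcases hdab with ⟨k, hk⟩
  -- if k ≤ 0 then m - a*u ≥ b*w ≥ 0, giving a representation
  by_contra hcon
  push_neg at hcon
  -- hcon : a*u + b*w < m + a*b, i.e. a*b*k < a*b, so k ≤ 0
  have hk1 : k < 1 := by nlinarith [mul_pos ha hb]
  have hmau : m - a * u = b * w - a * b * k := by linarith
  have hbdvd : b ∣ m - a * u := ⟨w - a * k, by linarith [hmau]⟩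
  rcases hbdvd with ⟨y, hy⟩
  have hy0 : 0 ≤ y := by nlinarith [mul_pos ha hb]
  exact hm ⟨u, y, hu0, hy0, by linarith⟩

lemma key_count (a b c n : ℤ) (ha : 0 < a) (hb : 0 < b) (hc : 0 < c)
    (hab : IsCoprime a b) (hac : IsCoprime a c) (hbc : IsCoprime b c)
    (hn : 0 ≤ n)
    (hnr : ¬ ∃ x y z : ℤ, 0 ≤ x ∧ 0 ≤ y ∧ 0 ≤ z ∧ n = a*x + b*y + c*z) :
    4 * (n^2 + n*(a+b+c)) ≤ a*b*c*(a+b) := by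
  obtain ⟨α', v, hinva⟩ := id hab   -- α' * a + v * b = 1
  obtain ⟨β', w, hinvb⟩ := id hab.symm  -- β' * b + w * a = 1
  have hα : α' * a ≡ 1 [ZMOD b] := Int.modEq_iff_dvd.2 ⟨v, by linarith⟩
  have hβ : β' * b ≡ 1 [ZMOD a] := Int.modEq_iff_dvd.2 ⟨w, by linarith⟩
  set Z : ℤ := n / c with hZ
  set ρ : ℤ := n % c with hρ
  have hZ0 : 0 ≤ Z := Int.ediv_nonneg hn hc.le
  have hρ0 : 0 ≤ ρ := Int.emod_nonneg _ hc.ne'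
  have hρc : ρ < c := Int.emod_lt_of_pos _ hc
  have hdecomp : c * Z + ρ = n := Int.mul_ediv_add_emod n c
  set K : ℕ := Z.toNat + 1 with hK
  have hKZ : (K : ℤ) = Z + 1 := by
    have := Int.toNat_of_nonneg hZ0
    push_cast
    omega
  -- each slice is non-representable by a, b
  have hslice : ∀ z : ℕ, z ∈ range K →
      (n - c * z) + a * b ≤ a * (((α' * n) + (-(α' * c)) * z) % b)
        + b * (((β' * n) + (-(β' * c)) * z) % a) := by
    intro z hz
    rw [Finset.mem_range] at hz
    have hzZ : (z : ℤ) ≤ Z := by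
      have : (z : ℤ) < K := by exact_mod_cast hz
      omega
    have hm : ¬ ∃ x y : ℤ, 0 ≤ x ∧ 0 ≤ y ∧ (n - c * z) = a * x + b * y := by
      rintro ⟨x, y, hx, hy, hxy⟩
      exact hnr ⟨x, y, (z : ℤ), hx, hy, by positivity, by linarith⟩
    have := nonrep_two a b (n - c * z) α' β' ha hb hab hα hβ hm
    have e1 : α' * (n - c * z) = (α' * n) + (-(α' * c)) * z := by ring
    have e2 : β' * (n - c * z) = (β' * n) + (-(β' * c)) * z := by ring
    rwa [e1, e2] at this
  -- sum over slices
  have hsum := Finset.sum_le_sum hslice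
  -- evaluate / bound the three sums
  have hS0 : ∑ z ∈ range K, ((n - c * z) + a * b)
      = K * (n + a * b) - c * ∑ z ∈ range K, (z : ℤ) := by
    rw [Finset.sum_add_distrib, Finset.sum_sub_distrib]
    simp [Finset.sum_const, Finset.mul_sum, mul_comm]
    ring
  set S1 : ℤ := ∑ z ∈ range K, (((α' * n) + (-(α' * c)) * z) % b) with hS1
  set S2 : ℤ := ∑ z ∈ range K, (((β' * n) + (-(β' * c)) * z) % a) with hS2
  set G : ℤ := ∑ z ∈ range K, (z : ℤ) with hG'
  have hS12 : ∑ z ∈ range K, (a * (((α' * n) + (-(α' * c)) * z) % b)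
      + b * (((β' * n) + (-(β' * c)) * z) % a)) = a * S1 + b * S2 := by
    rw [Finset.sum_add_distrib, ← Finset.mul_sum, ← Finset.mul_sum]
  have hsum2 : (K : ℤ) * (n + a * b) - c * G ≤ a * S1 + b * S2 := by
    rw [← hS12, ← hS0]
    exact hsum
  -- coprimality of the step coefficients
  have hcopb : IsCoprime (-(α' * c)) b := by
    have h1 : IsCoprime α' b := ⟨a, v, by linarith⟩
    exact (IsCoprime.mul_left h1 hbc.symm).neg_left
  have hcopa : IsCoprime (-(β' * c)) a := by
    have h1 : IsCoprime β' a := ⟨b, w, by linarith⟩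
    exact (IsCoprime.mul_left h1 hac.symm).neg_left
  have hb1 : 8 * S1 ≤ 4 * K * (b - 1) + b ^ 2 := sum_emod_bound b _ _ hb hcopb K
  have hb2 : 8 * S2 ≤ 4 * K * (a - 1) + a ^ 2 := sum_emod_bound a _ _ ha hcopa K
  have hG : 2 * G = (K : ℤ) * ((K : ℤ) - 1) := gauss_int K
  rw [hKZ] at hsum2 hb1 hb2 hG
  have p4 : c * Z * Z = (n - ρ) * Z := by rw [← hdecomp]; ring
  have e_a := mul_le_mul_of_nonneg_left hb1 ha.le
  have e_b := mul_le_mul_of_nonneg_left hb2 hb.le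
  have e_G : c * (2 * G) = c * ((Z + 1) * ((Z + 1) - 1)) := by rw [hG]
  have hmain : 4 * (Z + 1) * (n + ρ + a + b) ≤ a * b * (a + b) := by
    linarith [hsum2, e_a, e_b, e_G, p4, hdecomp]
  have hmainc : 4 * (n - ρ + c) * (n + ρ + a + b) ≤ a * b * c * (a + b) := by
    have h6 := mul_le_mul_of_nonneg_left hmain hc.le
    have e5 : c * (4 * (Z + 1) * (n + ρ + a + b)) = 4 * (n - ρ + c) * (n + ρ + a + b) := by
      linear_combination (4 * (n + ρ + a + b)) * hdecomp
    linarith [h6, e5]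
  have hpos : 0 ≤ (c - ρ) * (ρ + a + b) :=
    mul_nonneg (by linarith) (by linarith)
  linarith [hmainc, hpos]

lemma quad_ineq (a b c : ℤ) (ha : 1 ≤ a) (hb : 1 ≤ b) (h1 : a ≤ c) (h2 : b ≤ c) :
    2*(a+b+c)^2 ≤ a*b*c*(2*c-a-b) + 8*(a*b+b*c+c*a) := by
  have ha0 : (0:ℤ) ≤ a - 1 := by linarith
  have hb0 : (0:ℤ) ≤ b - 1 := by linarith
  have hca : (0:ℤ) ≤ c - a := by linarith
  have hcb : (0:ℤ) ≤ c - b := by linarith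
  have hc0 : (0:ℤ) ≤ c := by linarith
  nlinarith [mul_nonneg (mul_nonneg (mul_nonneg ha0 hb0) hc0) hca,
             mul_nonneg (mul_nonneg (mul_nonneg ha0 hb0) hc0) hcb,
             mul_nonneg (mul_nonneg hb0 hc0) hca,
             mul_nonneg (mul_nonneg ha0 hc0) hcb,
             mul_nonneg (mul_nonneg hca hc0) hcb,
             mul_nonneg hca hcb, sq_nonneg (a-b), sq_nonneg (a+b-c),
             mul_nonneg ha0 hb0, mul_nonneg (mul_nonneg ha0 hb0) (mul_nonneg hc0 hc0)]

lemma key_threshold (a b c : ℤ) (ha : 0 < a) (hb : 0 < b) (hc : 0 < c)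
    (hab : IsCoprime a b) (hac : IsCoprime a c) (hbc : IsCoprime b c)
    (h1 : a ≤ c) (h2 : b ≤ c) (t : ℤ)
    (hgt : (t : ℝ) > (1 / 2) * ((a : ℝ) + b + c)
        + (1 / 2) * Real.sqrt ((1 / 3) * ((a : ℝ) + b + c) * ((a : ℝ) + b + c
            + 2 * a * b * c) + (8 / 3) * ((a : ℝ) * b + (b : ℝ) * c + (c : ℝ) * a))) :
    ∃ x y z : ℤ, 0 < x ∧ 0 < y ∧ 0 < z ∧ t = a * x + b * y + c * z := by
  by_contra hcon
  set X : ℝ := (1 / 3) * ((a : ℝ) + b + c) * ((a : ℝ) + b + c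
            + 2 * a * b * c) + (8 / 3) * ((a : ℝ) * b + (b : ℝ) * c + (c : ℝ) * a) with hX
  have haR : (0:ℝ) < a := by exact_mod_cast ha
  have hbR : (0:ℝ) < b := by exact_mod_cast hb
  have hcR : (0:ℝ) < c := by exact_mod_cast hc
  -- the purely algebraic inequality, with c the largest
  have hQ : 2*((a:ℤ)+b+c)^2 ≤ a*b*c*(2*c-a-b) + 8*(a*b+b*c+c*a) := quad_ineq a b c ha hb h1 h2
  have hQ' : 2*((a:ℝ)+b+c)^2 ≤ (a:ℝ)*b*c*(2*c-a-b) + 8*((a:ℝ)*b+(b:ℝ)*c+(c:ℝ)*a) := by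
    exact_mod_cast hQ
  have hXs : ((a:ℝ)+b+c)^2 + (a:ℝ)*b*c*((a:ℝ)+b) ≤ X := by
    rw [hX]; linarith
  have habcR : (0:ℝ) < (a:ℝ)*b*c*((a:ℝ)+b) :=
    mul_pos (mul_pos (mul_pos haR hbR) hcR) (by linarith)
  have hX0 : (0:ℝ) ≤ X := by nlinarith [sq_nonneg ((a:ℝ)+b+c)]
  -- t > a+b+c
  have hsX : ((a:ℝ)+b+c) ≤ Real.sqrt X := by
    rw [show ((a:ℝ)+b+c) = Real.sqrt (((a:ℝ)+b+c)^2) from (Real.sqrt_sq (by positivity)).symm]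
    apply Real.sqrt_le_sqrt
    nlinarith [habcR]
  have hts : ((a:ℤ)+b+c) < t := by
    have : ((a:ℝ)+b+c) < t := by
      calc ((a:ℝ)+b+c) = (1/2)*((a:ℝ)+b+c) + (1/2)*((a:ℝ)+b+c) := by ring
        _ ≤ (1/2)*((a:ℝ)+b+c) + (1/2)*Real.sqrt X := by linarith
        _ < t := hgt
    exact_mod_cast this
  set n : ℤ := t - (a+b+c) with hn
  have hn0 : 0 ≤ n := by omega
  have hnr : ¬ ∃ x y z : ℤ, 0 ≤ x ∧ 0 ≤ y ∧ 0 ≤ z ∧ n = a*x + b*y + c*z := by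
    rintro ⟨x, y, z, hx, hy, hz, hxyz⟩
    exact hcon ⟨x+1, y+1, z+1, by omega, by omega, by omega, by linarith⟩
  have hcount := key_count a b c n ha hb hc hab hac hbc hn0 hnr
  -- from hgt : (2t - s)^2 > X
  have h2ts : Real.sqrt X < 2*(t:ℝ) - ((a:ℝ)+b+c) := by linarith
  have hsq : X < (2*(t:ℝ) - ((a:ℝ)+b+c))^2 := by
    have h0 : (0:ℝ) ≤ Real.sqrt X := Real.sqrt_nonneg X
    nlinarith [Real.sq_sqrt hX0, sq_nonneg (2*(t:ℝ) - ((a:ℝ)+b+c) - Real.sqrt X)]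
  have hZr : (a:ℝ)*b*c*((a:ℝ)+b) < 4*(t:ℝ)^2 - 4*(t:ℝ)*((a:ℝ)+b+c) := by nlinarith
  have hZ : (a:ℤ)*b*c*(a+b) < 4*t^2 - 4*t*(a+b+c) := by exact_mod_cast hZr
  -- but key_count says the opposite
  have : 4*(n^2 + n*(a+b+c)) = 4*t^2 - 4*t*(a+b+c) := by rw [hn]; ring
  linarith

lemma key_all (a b c : ℤ) (ha : 0 < a) (hb : 0 < b) (hc : 0 < c)
    (hab : IsCoprime a b) (hac : IsCoprime a c) (hbc : IsCoprime b c) (t : ℤ)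
    (hgt : (t : ℝ) > (1 / 2) * ((a : ℝ) + b + c)
        + (1 / 2) * Real.sqrt ((1 / 3) * ((a : ℝ) + b + c) * ((a : ℝ) + b + c
            + 2 * a * b * c) + (8 / 3) * ((a : ℝ) * b + (b : ℝ) * c + (c : ℝ) * a))) :
    ∃ x y z : ℤ, 0 < x ∧ 0 < y ∧ 0 < z ∧ t = a * x + b * y + c * z := by
  rcases le_total a c with h1 | h1
  · rcases le_total b c with h2 | h2
    · exact key_threshold a b c ha hb hc hab hac hbc h1 h2 t hgt
    · -- b is max : use (a, c, b)
      have hgt' : (t : ℝ) > (1 / 2) * ((a : ℝ) + c + b)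
          + (1 / 2) * Real.sqrt ((1 / 3) * ((a : ℝ) + c + b) * ((a : ℝ) + c + b
              + 2 * a * c * b) + (8 / 3) * ((a : ℝ) * c + (c : ℝ) * b + (b : ℝ) * a)) := by
        rw [show (1 / 3) * ((a : ℝ) + c + b) * ((a : ℝ) + c + b + 2 * a * c * b)
              + (8 / 3) * ((a : ℝ) * c + (c : ℝ) * b + (b : ℝ) * a)
            = (1 / 3) * ((a : ℝ) + b + c) * ((a : ℝ) + b + c + 2 * a * b * c)
              + (8 / 3) * ((a : ℝ) * b + (b : ℝ) * c + (c : ℝ) * a) from by ring]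
        calc (1 / 2) * ((a : ℝ) + c + b) + (1/2) * Real.sqrt _
            = (1 / 2) * ((a : ℝ) + b + c) + (1/2) * Real.sqrt _ := by ring_nf
          _ < t := hgt
      obtain ⟨x, y, z, hx, hy, hz, hxyz⟩ :=
        key_threshold a c b ha hc hb hac hab hbc.symm (h1.trans h2) h2 t hgt'
      exact ⟨x, z, y, hx, hz, hy, by linarith⟩
  · rcases le_total b a with h2 | h2
    · -- a is max : use (b, c, a)
      have hgt' : (t : ℝ) > (1 / 2) * ((b : ℝ) + c + a)
          + (1 / 2) * Real.sqrt ((1 / 3) * ((b : ℝ) + c + a) * ((b : ℝ) + c + a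
              + 2 * b * c * a) + (8 / 3) * ((b : ℝ) * c + (c : ℝ) * a + (a : ℝ) * b)) := by
        rw [show (1 / 3) * ((b : ℝ) + c + a) * ((b : ℝ) + c + a + 2 * b * c * a)
              + (8 / 3) * ((b : ℝ) * c + (c : ℝ) * a + (a : ℝ) * b)
            = (1 / 3) * ((a : ℝ) + b + c) * ((a : ℝ) + b + c + 2 * a * b * c)
              + (8 / 3) * ((a : ℝ) * b + (b : ℝ) * c + (c : ℝ) * a) from by ring]
        calc (1 / 2) * ((b : ℝ) + c + a) + (1/2) * Real.sqrt _
            = (1 / 2) * ((a : ℝ) + b + c) + (1/2) * Real.sqrt _ := by ring_nf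
          _ < t := hgt
      obtain ⟨x, y, z, hx, hy, hz, hxyz⟩ :=
        key_threshold b c a hb hc ha hbc hab.symm hac.symm h2 h1 t hgt'
      exact ⟨z, x, y, hz, hx, hy, by linarith⟩
    · -- b is max (a ≤ b, c ≤ a ≤ b) : use (a, c, b)
      have h3 : c ≤ b := h1.trans h2
      have hgt' : (t : ℝ) > (1 / 2) * ((a : ℝ) + c + b)
          + (1 / 2) * Real.sqrt ((1 / 3) * ((a : ℝ) + c + b) * ((a : ℝ) + c + b
              + 2 * a * c * b) + (8 / 3) * ((a : ℝ) * c + (c : ℝ) * b + (b : ℝ) * a)) := by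
        rw [show (1 / 3) * ((a : ℝ) + c + b) * ((a : ℝ) + c + b + 2 * a * c * b)
              + (8 / 3) * ((a : ℝ) * c + (c : ℝ) * b + (b : ℝ) * a)
            = (1 / 3) * ((a : ℝ) + b + c) * ((a : ℝ) + b + c + 2 * a * b * c)
              + (8 / 3) * ((a : ℝ) * b + (b : ℝ) * c + (c : ℝ) * a) from by ring]
        calc (1 / 2) * ((a : ℝ) + c + b) + (1/2) * Real.sqrt _
            = (1 / 2) * ((a : ℝ) + b + c) + (1/2) * Real.sqrt _ := by ring_nf
          _ < t := hgt
      obtain ⟨x, y, z, hx, hy, hz, hxyz⟩ :=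
        key_threshold a c b ha hc hb hac hab hbc.symm h2 h3 t hgt'
      exact ⟨x, z, y, hx, hz, hy, by linarith⟩


/-- Let `a, b, c` be pairwise coprime positive integers. Then every integer
`t` exceeding
`(1/2)(a+b+c) + (1/2)√((1/3)(a+b+c)(a+b+c+2abc) + (8/3)(ab+bc+ca))`
is a strictly positive integral combination of `a, b, c`; equivalently, the
largest integer `F*(a,b,c)` not so representable satisfies this bound. -/
theorem Fstar_upper_bound (a b c : ℕ) (ha : 0 < a) (hb : 0 < b) (hc : 0 < c)
    (hab : Nat.gcd a b = 1) (hbc : Nat.gcd b c = 1) (hac : Nat.gcd a c = 1) :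
    (∀ t : ℤ,
      (t : ℝ) > (1 / 2) * ((a : ℝ) + b + c)
          + (1 / 2) * Real.sqrt ((1 / 3) * ((a : ℝ) + b + c) * ((a : ℝ) + b + c
              + 2 * a * b * c) + (8 / 3) * ((a : ℝ) * b + (b : ℝ) * c + (c : ℝ) * a)) →
      ∃ x y z : ℤ, 0 < x ∧ 0 < y ∧ 0 < z ∧
        t = (a : ℤ) * x + (b : ℤ) * y + (c : ℤ) * z) ∧
    (∀ Fstar : ℤ,
      IsGreatest {t : ℤ | ¬ ∃ x y z : ℤ, 0 < x ∧ 0 < y ∧ 0 < z ∧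
          t = (a : ℤ) * x + (b : ℤ) * y + (c : ℤ) * z} Fstar →
      (Fstar : ℝ) ≤ (1 / 2) * ((a : ℝ) + b + c)
          + (1 / 2) * Real.sqrt ((1 / 3) * ((a : ℝ) + b + c) * ((a : ℝ) + b + c
              + 2 * a * b * c) + (8 / 3) * ((a : ℝ) * b + (b : ℝ) * c + (c : ℝ) * a))) := by
  have ha' : (0:ℤ) < (a:ℤ) := by exact_mod_cast ha
  have hb' : (0:ℤ) < (b:ℤ) := by exact_mod_cast hb
  have hc' : (0:ℤ) < (c:ℤ) := by exact_mod_cast hc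
  have hab' : IsCoprime (a:ℤ) (b:ℤ) := by rw [Nat.isCoprime_iff_coprime]; exact hab
  have hbc' : IsCoprime (b:ℤ) (c:ℤ) := by rw [Nat.isCoprime_iff_coprime]; exact hbc
  have hac' : IsCoprime (a:ℤ) (c:ℤ) := by rw [Nat.isCoprime_iff_coprime]; exact hac
  have main : ∀ t : ℤ,
      (t : ℝ) > (1 / 2) * ((a : ℝ) + b + c)
          + (1 / 2) * Real.sqrt ((1 / 3) * ((a : ℝ) + b + c) * ((a : ℝ) + b + c
              + 2 * a * b * c) + (8 / 3) * ((a : ℝ) * b + (b : ℝ) * c + (c : ℝ) * a)) →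
      ∃ x y z : ℤ, 0 < x ∧ 0 < y ∧ 0 < z ∧
        t = (a : ℤ) * x + (b : ℤ) * y + (c : ℤ) * z := by
    intro t hgt
    have hgt' : (t : ℝ) > (1 / 2) * (((a:ℤ) : ℝ) + ((b:ℤ):ℝ) + ((c:ℤ):ℝ))
        + (1 / 2) * Real.sqrt ((1 / 3) * (((a:ℤ) : ℝ) + ((b:ℤ):ℝ) + ((c:ℤ):ℝ)) * (((a:ℤ) : ℝ) + ((b:ℤ):ℝ) + ((c:ℤ):ℝ)
            + 2 * ((a:ℤ):ℝ) * ((b:ℤ):ℝ) * ((c:ℤ):ℝ)) + (8 / 3) * (((a:ℤ) : ℝ) * ((b:ℤ):ℝ) + ((b:ℤ) : ℝ) * ((c:ℤ):ℝ) + ((c:ℤ) : ℝ) * ((a:ℤ):ℝ))) := by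
      push_cast
      push_cast at hgt
      exact hgt
    exact key_all (a:ℤ) (b:ℤ) (c:ℤ) ha' hb' hc' hab' hac' hbc' t hgt'
  refine ⟨main, ?_⟩
  intro Fstar hF
  by_contra hlt
  push_neg at hlt
  obtain ⟨x, y, z, hx, hy, hz, hxyz⟩ := main Fstar hlt
  exact hF.1 ⟨x, y, z, hx, hy, hz, hxyz⟩
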